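/- On the open set {sin θ ≠ 0} of ℝ⁸ with coordinates (t,r,θ,φ,ṫ,ṙ,θ̇,φ̇), define the vector fields δ_θ := ∂_θ − cot θ·φ̇·∂̇_φ and δ_φ := ∂_φ + sin θ cos θ·φ̇·∂̇_θ − cot θ·θ̇·∂̇_φ. Then the bracket B := [δ_θ, δ_φ] equals −sin²θ·φ̇·∂̇_θ + θ̇·∂̇_φ, and both iterated Lie brackets [δ_θ, B] and [δ_φ, B] are pointwise scalar multiples of B: at every point p there exist scalars λ(p), μ(p) ∈ ℝ with [δ_θ, B](p) = λ(p)·B(p) and [δ_φ, B](p) = μ(p)·B(p). -/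

import Mathlib

noncomputable section

/-- Points of `ℝ⁸` with coordinates `(t,r,θ,φ,ṫ,ṙ,θ̇,φ̇)`. -/
abbrev Pt : Type := Fin 8 → ℝ

/-- `δ_θ := ∂_θ − cot θ · φ̇ · ∂̇_φ`. -/
def δθ (p : Pt) : Pt :=
  Pi.single (2 : Fin 8) 1 - Pi.single (7 : Fin 8) (Real.cos (p 2) / Real.sin (p 2) * p 7)

/-- `δ_φ := ∂_φ + sin θ cos θ · φ̇ · ∂̇_θ − cot θ · θ̇ · ∂̇_φ`. -/
def δφ (p : Pt) : Pt :=
  Pi.single (3 : Fin 8) 1 + Pi.single (6 : Fin 8) (Real.sin (p 2) * Real.cos (p 2) * p 7)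
    - Pi.single (7 : Fin 8) (Real.cos (p 2) / Real.sin (p 2) * p 6)

/-- `B := −sin²θ · φ̇ · ∂̇_θ + θ̇ · ∂̇_φ`. -/
def Bvf (p : Pt) : Pt :=
  Pi.single (6 : Fin 8) (-Real.sin (p 2) ^ 2 * p 7) + Pi.single (7 : Fin 8) (p 6)

/-- Lie bracket of vector fields on `ℝ⁸`. -/
def lie (X Y : Pt → Pt) (p : Pt) : Pt :=
  fderiv ℝ Y p (X p) - fderiv ℝ X p (Y p)

def pr (i : Fin 8) : Pt →L[ℝ] ℝ := ContinuousLinearMap.proj i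

lemma hcotF (p : Pt) (hs : Real.sin (p 2) ≠ 0) :
    HasFDerivAt (fun q : Pt => Real.cos (q 2) / Real.sin (q 2))
      ((-1 / Real.sin (p 2) ^ 2) • pr 2) p := by
  have h1 := (Real.hasDerivAt_cos (p 2)).div (Real.hasDerivAt_sin (p 2)) hs
  have h2 : HasDerivAt (fun x => Real.cos x / Real.sin x) (-1 / Real.sin (p 2) ^ 2) (p 2) := by
    refine h1.congr_deriv ?_
    have := Real.sin_sq_add_cos_sq (p 2)
    rw [div_left_inj' (pow_ne_zero 2 hs)]
    nlinarith [this]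
  exact h2.comp_hasFDerivAt p (hasFDerivAt_apply (𝕜 := ℝ) 2 p)

def Lθ (p : Pt) : Pt →L[ℝ] Pt :=
  ContinuousLinearMap.pi fun i =>
    if i = (7 : Fin 8) then
      -((-1 / Real.sin (p 2) ^ 2 * p 7) • pr 2 + (Real.cos (p 2) / Real.sin (p 2)) • pr 7)
    else 0

def Lφ (p : Pt) : Pt →L[ℝ] Pt :=
  ContinuousLinearMap.pi fun i =>
    if i = (6 : Fin 8) then
      ((Real.cos (p 2) ^ 2 - Real.sin (p 2) ^ 2) * p 7) • pr 2
        + (Real.sin (p 2) * Real.cos (p 2)) • pr 7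
    else if i = (7 : Fin 8) then
      -((-1 / Real.sin (p 2) ^ 2 * p 6) • pr 2 + (Real.cos (p 2) / Real.sin (p 2)) • pr 6)
    else 0

def LB (p : Pt) : Pt →L[ℝ] Pt :=
  ContinuousLinearMap.pi fun i =>
    if i = (6 : Fin 8) then
      (-2 * Real.sin (p 2) * Real.cos (p 2) * p 7) • pr 2 + (-Real.sin (p 2) ^ 2) • pr 7
    else if i = (7 : Fin 8) then pr 6
    else 0

lemma hδθ (p : Pt) (hs : Real.sin (p 2) ≠ 0) : HasFDerivAt δθ (Lθ p) p := by
  rw [show δθ = fun q i => δθ q i from rfl, Lθ]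
  refine hasFDerivAt_pi.2 fun i => ?_
  rcases eq_or_ne i 7 with rfl | hi
  · rw [if_pos rfl,
      show (fun q : Pt => δθ q 7) = fun q => -(Real.cos (q 2) / Real.sin (q 2) * q 7) by
        funext q; simp [δθ, Pi.single_apply]]
    have hg : HasFDerivAt (fun q : Pt => Real.cos (q 2) / Real.sin (q 2) * q 7)
        ((-1 / Real.sin (p 2) ^ 2 * p 7) • pr 2 + (Real.cos (p 2) / Real.sin (p 2)) • pr 7) p := by
      have := (hcotF p hs).mul (hasFDerivAt_apply (7 : Fin 8) p)
      refine this.congr_fderiv ?_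
      ext v; simp [pr]; ring
    exact hg.neg
  · rw [if_neg hi,
      show (fun q : Pt => δθ q i) = fun _ : Pt => (if i = 2 then (1:ℝ) else 0) by
        funext q; simp [δθ, Pi.single_apply, hi]]
    exact hasFDerivAt_const _ _

lemma hδφ (p : Pt) (hs : Real.sin (p 2) ≠ 0) : HasFDerivAt δφ (Lφ p) p := by
  rw [show δφ = fun q i => δφ q i from rfl, Lφ]
  refine hasFDerivAt_pi.2 fun i => ?_
  rcases eq_or_ne i 6 with rfl | hi6
  · rw [if_pos rfl,
      show (fun q : Pt => δφ q 6) = fun q => Real.sin (q 2) * Real.cos (q 2) * q 7 by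
        funext q; simp [δφ, Pi.single_apply]]
    have h2 : HasDerivAt (fun x => Real.sin x * Real.cos x)
        (Real.cos (p 2) ^ 2 - Real.sin (p 2) ^ 2) (p 2) := by
      refine ((Real.hasDerivAt_sin (p 2)).mul (Real.hasDerivAt_cos (p 2))).congr_deriv ?_; ring
    have hsc : HasFDerivAt (fun q : Pt => Real.sin (q 2) * Real.cos (q 2))
        ((Real.cos (p 2) ^ 2 - Real.sin (p 2) ^ 2) • pr 2) p :=
      by have := h2.comp_hasFDerivAt p (hasFDerivAt_apply (𝕜 := ℝ) 2 p); exact this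
    have := hsc.mul (hasFDerivAt_apply (7 : Fin 8) p)
    refine this.congr_fderiv ?_
    ext v; simp [pr]; ring
  rcases eq_or_ne i 7 with rfl | hi7
  · rw [if_neg (by decide), if_pos rfl,
      show (fun q : Pt => δφ q 7) = fun q => -(Real.cos (q 2) / Real.sin (q 2) * q 6) by
        funext q; simp [δφ, Pi.single_apply]]
    have hg : HasFDerivAt (fun q : Pt => Real.cos (q 2) / Real.sin (q 2) * q 6)
        ((-1 / Real.sin (p 2) ^ 2 * p 6) • pr 2 + (Real.cos (p 2) / Real.sin (p 2)) • pr 6) p := by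
      have := (hcotF p hs).mul (hasFDerivAt_apply (6 : Fin 8) p)
      refine this.congr_fderiv ?_
      ext v; simp [pr]; ring
    exact hg.neg
  · rw [if_neg hi6, if_neg hi7,
      show (fun q : Pt => δφ q i) = fun _ : Pt => (if i = 3 then (1:ℝ) else 0) by
        funext q; simp [δφ, Pi.single_apply, hi6, hi7]]
    exact hasFDerivAt_const _ _

lemma hBvf (p : Pt) : HasFDerivAt Bvf (LB p) p := by
  rw [show Bvf = fun q i => Bvf q i from rfl, LB]
  refine hasFDerivAt_pi.2 fun i => ?_
  rcases eq_or_ne i 6 with rfl | hi6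
  · rw [if_pos rfl,
      show (fun q : Pt => Bvf q 6) = fun q => -Real.sin (q 2) ^ 2 * q 7 by
        funext q; simp [Bvf, Pi.single_apply]]
    have h2 : HasDerivAt (fun x => -Real.sin x ^ 2)
        (-2 * Real.sin (p 2) * Real.cos (p 2)) (p 2) := by
      refine ((Real.hasDerivAt_sin (p 2)).pow 2).neg.congr_deriv ?_; ring
    have hsq : HasFDerivAt (fun q : Pt => -Real.sin (q 2) ^ 2)
        ((-2 * Real.sin (p 2) * Real.cos (p 2)) • pr 2) p :=
      by have := h2.comp_hasFDerivAt p (hasFDerivAt_apply (𝕜 := ℝ) 2 p); exact this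
    have := hsq.mul (hasFDerivAt_apply (7 : Fin 8) p)
    refine this.congr_fderiv ?_
    ext v; simp [pr]; ring
  rcases eq_or_ne i 7 with rfl | hi7
  · rw [if_neg (by decide), if_pos rfl,
      show (fun q : Pt => Bvf q 7) = fun q : Pt => q 6 by
        funext q; simp [Bvf, Pi.single_apply]]
    exact hasFDerivAt_apply 6 p
  · rw [if_neg hi6, if_neg hi7,
      show (fun q : Pt => Bvf q i) = fun _ : Pt => (0:ℝ) by
        funext q; simp [Bvf, Pi.single_apply, hi6, hi7]]
    exact hasFDerivAt_const _ _

/-- bracket computation in Lemma 4.7, Class 4. On `{sin θ ≠ 0}`,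
`[δ_θ, δ_φ] = B = −sin²θ·φ̇·∂̇_θ + θ̇·∂̇_φ`, and both iterated brackets `[δ_θ, B]` and
`[δ_φ, B]` are pointwise scalar multiples of `B`. -/
theorem statement_14 :
    ∀ p : Pt, Real.sin (p 2) ≠ 0 →
      lie δθ δφ p = Bvf p ∧
      (∃ lam : ℝ, lie δθ Bvf p = lam • Bvf p) ∧
      (∃ mu : ℝ, lie δφ Bvf p = mu • Bvf p) := by
  intro p hs
  have hθ := (hδθ p hs).fderiv
  have hφ := (hδφ p hs).fderiv
  have hB := (hBvf p).fderiv
  have hθv : ∀ i, δθ p i = if i = 2 then 1 else if i = 7 then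
      -(Real.cos (p 2) / Real.sin (p 2) * p 7) else 0 := by
    intro i; simp [δθ, Pi.single_apply]
    split_ifs <;> simp_all
  refine ⟨?_, ⟨Real.cos (p 2) / Real.sin (p 2), ?_⟩, ⟨0, ?_⟩⟩
  · rw [lie, hθ, hφ]
    funext i
    simp only [Lθ, Lφ, Bvf, Pi.sub_apply, ContinuousLinearMap.pi_apply, Pi.single_apply]
    rcases eq_or_ne i 6 with rfl | hi6
    · simp [pr, δθ, δφ, Pi.single_apply]
      field_simp
      nlinarith [Real.sin_sq_add_cos_sq (p 2)]
    rcases eq_or_ne i 7 with rfl | hi7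
    · simp [pr, δθ, δφ, Pi.single_apply]
      field_simp
      linear_combination (-(p 6)) * Real.sin_sq_add_cos_sq (p 2)
    · simp [hi6, hi7]
  · rw [lie, hθ, hB]
    funext i
    simp only [LB, Lθ, Bvf, Pi.sub_apply, Pi.smul_apply, ContinuousLinearMap.pi_apply,
      Pi.single_apply, Pi.add_apply, smul_eq_mul]
    rcases eq_or_ne i 6 with rfl | hi6
    · simp [pr, δθ, Bvf, Pi.single_apply]
      field_simp
      ring
    rcases eq_or_ne i 7 with rfl | hi7
    · simp [pr, δθ, Bvf, Pi.single_apply]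
    · simp [hi6, hi7]
  · rw [lie, hφ, hB]
    funext i
    simp only [LB, Lφ, Bvf, Pi.sub_apply, Pi.smul_apply, ContinuousLinearMap.pi_apply,
      Pi.single_apply, Pi.add_apply, smul_eq_mul]
    rcases eq_or_ne i 6 with rfl | hi6
    · simp [pr, δφ, Bvf, Pi.single_apply]
      field_simp
      ring
    rcases eq_or_ne i 7 with rfl | hi7
    · simp [pr, δφ, Bvf, Pi.single_apply]
      field_simp
      ring
    · simp [hi6, hi7]

end
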